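/- Let k > 0 and let T be a linear operator that maps each function holomorphic on some neighborhood of the segment I = [-1,1] ⊂ ℂ to a function holomorphic on some neighborhood of I, satisfying the A(k) property with k-threshold τ. Let u be holomorphic and bounded on [-1,1]_r := {z ∈ ℂ : dist(z, I) < r} for some r ∈ (0,τ]. Then the series Σ_{n≥0} (T^{<n>} u)|_{[-1,1]} of iterates of T applied to u converges uniformly on [-1,1], its sum v belongs to the Gevrey class G_k([-1,1]), and v satisfies the linear functional equation v − T̃(v) = u on [-1,1], where T̃ is the endomorphism of G_k([-1,1]) induced by T (equivalently, v(x) = u(x) + Σ_{n≥1} (T^{<n>} u)(x) for all x ∈ [-1,1], the series Σ_{n≥1} (T^{<n>} u)|_{[-1,1]} being the value of T̃ at v). -/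

import Mathlib

open Metric Set Filter
open MeasureTheory

noncomputable section

/-- The segment `[-1,1]` viewed inside `ℂ`. -/
def seg : Set ℂ := (fun x : ℝ => (x : ℂ)) '' Set.Icc (-1) 1

/-- The neighborhood `[-1,1]_r` of the segment. -/
def nbd (r : ℝ) : Set ℂ := {z : ℂ | Metric.infDist z seg < r}

/-- The set `[-1,1]_{k,A,n}`. -/
def tube (k A : ℝ) (n : ℕ) : Set ℂ :=
  {z : ℂ | Metric.infDist z seg < A * (n : ℝ) ^ (-(1 : ℝ) / k)}

/-- Sup norm of `f` on `S`. -/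
def supOn (f : ℂ → ℂ) (S : Set ℂ) : ℝ := sSup ((fun z => ‖f z‖) '' S)

/-- The Gevrey class `G_k([-1,1])`. -/
def GevreyClass (k : ℝ) (f : ℝ → ℂ) : Prop :=
  ContDiffOn ℝ (⊤ : ℕ∞) f (Set.Icc (-1) 1) ∧
  ∃ C > 0, ∃ A > 0, ∀ n : ℕ, ∀ x ∈ Set.Icc (-1 : ℝ) 1,
    ‖iteratedDerivWithin n f (Set.Icc (-1 : ℝ) 1) x‖ ≤
      C * A ^ n * (n : ℝ) ^ ((n : ℝ) * (1 + 1 / k))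

/-- `(f_n)_{n ≥ 1}` is a `k`-sequence. -/
def IsKSeq (k : ℝ) (f : ℕ → ℂ → ℂ) : Prop :=
  ∃ B > 0, ∃ C > 0, ∃ θ ∈ Set.Ioo (0 : ℝ) 1, ∀ n : ℕ, 1 ≤ n →
    DifferentiableOn ℂ (f n) (tube k B n) ∧ ∀ z ∈ tube k B n, ‖f n z‖ ≤ C * θ ^ n

/-- The `E(k)` property with threshold `τ` for a sequence of functions on `[-1,1]_σ`. -/
def EPropWith (k σ : ℝ) (φ : ℕ → ℂ → ℂ) (τ : ℝ) : Prop :=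
  0 < τ ∧ τ ≤ σ ∧ ∀ A : ℝ, 0 < A → A ≤ τ → ∃ M : ℕ, ∀ n : ℕ, M ≤ n → ∀ p : ℕ,
    ∀ z ∈ tube k A (n + 1), φ p z ∈ tube k A n

/-- The `E(k)` property. -/
def EProp (k σ : ℝ) (φ : ℕ → ℂ → ℂ) : Prop := ∃ τ : ℝ, EPropWith k σ φ τ

/-- `T` is a linear operator on functions. -/
def IsLinOp (T : (ℂ → ℂ) → ℂ → ℂ) : Prop :=
  (∀ f g : ℂ → ℂ, T (f + g) = T f + T g) ∧ ∀ (c : ℂ) (f : ℂ → ℂ), T (c • f) = c • T f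

/-- The quantitative part of the `A(k)` property, for a given `A` and integer `N = N(A)`. -/
def APropAt (k : ℝ) (T : (ℂ → ℂ) → ℂ → ℂ) (ρ A : ℝ) (N : ℕ) : Prop :=
  ∀ n : ℕ, N ≤ n → ∀ f : ℂ → ℂ, DifferentiableOn ℂ f (tube k A n) →
    BddAbove ((fun z => ‖f z‖) '' tube k A n) →
    DifferentiableOn ℂ (T f) (tube k A (n + 1)) ∧
      ∀ z ∈ tube k A (n + 1), ‖T f z‖ ≤ ρ * supOn f (tube k A n)

/-- The `A(k)` property with `k`-threshold `τ` and contraction constant `ρ`. -/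
def AProp (k : ℝ) (T : (ℂ → ℂ) → ℂ → ℂ) (τ ρ : ℝ) : Prop :=
  0 < τ ∧ ρ ∈ Set.Ioo (0 : ℝ) 1 ∧
  (∀ A : ℝ, 0 < A → A ≤ τ → ∃ N : ℕ, APropAt k T ρ A N) ∧
  (∀ f : ℂ → ℂ, (∃ r > 0, DifferentiableOn ℂ f (nbd r)) →
      ∀ z ∈ seg, ‖T f z‖ ≤ ρ * supOn f seg)
lemma seg_mem (x : ℝ) (hx : x ∈ Set.Icc (-1:ℝ) 1) : (x:ℂ) ∈ seg := ⟨x, hx, rfl⟩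

lemma tube_open (k A : ℝ) (n : ℕ) : IsOpen (tube k A n) :=
  isOpen_lt (continuous_infDist_pt seg) continuous_const

lemma seg_subset_tube {k A : ℝ} (hA : 0 < A) {n : ℕ} (hn : 1 ≤ n) : seg ⊆ tube k A n := by
  rintro z ⟨x, hx, rfl⟩
  have h1 : (0:ℝ) < A * (n:ℝ) ^ (-(1:ℝ)/k) :=
    mul_pos hA (Real.rpow_pos_of_pos (by exact_mod_cast hn) _)
  simpa [tube, Set.mem_setOf_eq, Metric.infDist_zero_of_mem (seg_mem x hx)] using h1

lemma tube_subset_nbd {k r : ℝ} (hk : 0 < k) (hr : 0 < r) {n : ℕ} (hn : 1 ≤ n) :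
    tube k r n ⊆ nbd r := by
  intro z hz
  have h1 : (n:ℝ) ^ (-(1:ℝ)/k) ≤ 1 := by
    apply Real.rpow_le_one_of_one_le_of_nonpos (by exact_mod_cast hn)
    rw [neg_div]
    exact neg_nonpos.mpr (by positivity)
  have := hz.trans_le (by nlinarith : r * (n:ℝ) ^ (-(1:ℝ)/k) ≤ r)
  exact this

lemma closedBall_subset_tube {k r : ℝ} {x : ℝ} (hx : x ∈ Set.Icc (-1:ℝ) 1) {δ : ℝ} {n : ℕ}
    (hδ : δ < r * (n:ℝ) ^ (-(1:ℝ)/k)) :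
    Metric.closedBall (x:ℂ) δ ⊆ tube k r n := by
  intro w hw
  have h1 : Metric.infDist w seg ≤ dist w (x:ℂ) := Metric.infDist_le_dist_of_mem (seg_mem x hx)
  exact lt_of_le_of_lt (h1.trans (Metric.mem_closedBall.1 hw)) hδ

lemma rpow_mul_exp_le {a s t : ℝ} (ha : 0 < a) (hs : 0 ≤ s) (ht : 0 < t) :
    t ^ s * Real.exp (-(a * t)) ≤ (s / a) ^ s := by
  rcases eq_or_lt_of_le hs with h0 | hs'
  · simp [← h0, Real.exp_le_one_iff, neg_nonpos, (mul_pos ha ht).le]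
  · have h2 : a * t / s ≤ Real.exp (a * t / s) := by
      have := Real.add_one_le_exp (a * t / s - 1)
      have h3 : Real.exp (a * t / s - 1) ≤ Real.exp (a * t / s) :=
        Real.exp_le_exp.2 (by linarith)
      linarith
    have h1 : t ≤ s / a * Real.exp (a * t / s) := by
      rw [div_mul_eq_mul_div, le_div_iff₀ ha]
      calc t * a = (a * t / s) * s := by field_simp
        _ ≤ Real.exp (a * t / s) * s := by
            exact mul_le_mul_of_nonneg_right h2 hs
        _ = s * Real.exp (a * t / s) := by ring
    have h4 : t ^ s ≤ (s / a * Real.exp (a * t / s)) ^ s :=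
      Real.rpow_le_rpow ht.le h1 hs
    have h5 : (s / a * Real.exp (a * t / s)) ^ s
        = (s / a) ^ s * Real.exp (a * t) := by
      rw [Real.mul_rpow (by positivity) (Real.exp_pos _).le, ← Real.exp_mul]
      congr 1
      field_simp
    calc t ^ s * Real.exp (-(a * t)) ≤ (s / a * Real.exp (a * t / s)) ^ s * Real.exp (-(a*t)) :=
          mul_le_mul_of_nonneg_right h4 (Real.exp_pos _).le
      _ = (s / a) ^ s * (Real.exp (a*t) * Real.exp (-(a*t))) := by rw [h5]; ring
      _ = (s / a) ^ s := by rw [← Real.exp_add]; simp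




lemma cauchy_bound {f : ℂ → ℂ} {c : ℂ} {R C : ℝ} (hR : 0 < R)
    (hf : DifferentiableOn ℂ f (Metric.closedBall c R))
    (hC : ∀ z ∈ Metric.closedBall c R, ‖f z‖ ≤ C) (n : ℕ) :
    ‖iteratedDeriv n f c‖ ≤ (n.factorial : ℝ) * C / R ^ n := by
  lift R to NNReal using hR.le with R' hR'
  have hR0 : 0 < R' := by exact_mod_cast hR
  have hp : HasFPowerSeriesOnBall f (cauchyPowerSeries f c R') c R' :=
    hf.hasFPowerSeriesOnBall hR0
  have key := hp.factorial_smul (1 : ℂ) n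
  have h0 : iteratedDeriv n f c = iteratedFDeriv ℂ n f c (fun _ => 1) := by
    rw [iteratedDeriv_eq_iteratedFDeriv]
  have hC0 : 0 ≤ C := (norm_nonneg _).trans (hC c (Metric.mem_closedBall_self hR.le))
  have h1 : ‖iteratedDeriv n f c‖ = (n.factorial : ℝ) * ‖cauchyPowerSeries f c R' n (fun _ => 1)‖ := by
    rw [h0, ← key, ← Nat.cast_smul_eq_nsmul ℂ, norm_smul]
    simp
  have h2 : ‖cauchyPowerSeries f c R' n (fun _ => 1)‖ ≤ ‖cauchyPowerSeries f c R' n‖ := by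
    simpa using (cauchyPowerSeries f c R' n).le_opNorm (fun _ => 1)
  have h3 : ‖cauchyPowerSeries f c R' n‖ ≤
      ((2 * Real.pi)⁻¹ * ∫ θ : ℝ in (0)..2 * Real.pi, ‖f (circleMap c R' θ)‖) * |(R':ℝ)|⁻¹ ^ n :=
    norm_cauchyPowerSeries_le f c R' n
  have hcont : ContinuousOn (fun θ : ℝ => ‖f (circleMap c R' θ)‖) (Set.uIcc 0 (2*Real.pi)) := by
    apply ContinuousOn.norm
    apply hf.continuousOn.comp (continuous_circleMap c R').continuousOn
    intro θ _
    simpa using circleMap_mem_closedBall c hR.le θ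
  have h4 : (∫ θ : ℝ in (0)..2 * Real.pi, ‖f (circleMap c R' θ)‖) ≤ C * (2 * Real.pi) := by
    have := intervalIntegral.integral_mono_on (μ := MeasureTheory.volume) (a := 0) (b := 2*Real.pi)
      (f := fun θ : ℝ => ‖f (circleMap c R' θ)‖) (g := fun _ => C)
      Real.two_pi_pos.le (hcont.intervalIntegrable) ((continuousOn_const (c := C)).intervalIntegrable)
      (fun θ _ => hC _ (sphere_subset_closedBall (circleMap_mem_sphere c hR.le θ)))
    simpa [mul_comm] using this
  have hRabs : |(R':ℝ)| = (R':ℝ) := abs_of_pos hR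
  calc ‖iteratedDeriv n f c‖
      = (n.factorial : ℝ) * ‖cauchyPowerSeries f c R' n (fun _ => 1)‖ := h1
    _ ≤ (n.factorial : ℝ) * (((2 * Real.pi)⁻¹ * ∫ θ : ℝ in (0)..2 * Real.pi,
          ‖f (circleMap c R' θ)‖) * |(R':ℝ)|⁻¹ ^ n) := by
        apply mul_le_mul_of_nonneg_left (h2.trans h3) (by positivity)
    _ ≤ (n.factorial : ℝ) * (((2 * Real.pi)⁻¹ * (C * (2 * Real.pi))) * |(R':ℝ)|⁻¹ ^ n) := by
        apply mul_le_mul_of_nonneg_left _ (by positivity)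
        apply mul_le_mul_of_nonneg_right _ (by positivity)
        apply mul_le_mul_of_nonneg_left h4 (by positivity)
    _ = (n.factorial : ℝ) * C / (R':ℝ) ^ n := by
        rw [hRabs]
        field_simp
        rw [one_div, inv_pow, mul_assoc, inv_mul_cancel₀ (pow_ne_zero _ hR.ne'), mul_one]

lemma iteratedDeriv_comp_ofReal {f : ℂ → ℂ} {s : Set ℂ} (hs : IsOpen s)
    (hf : DifferentiableOn ℂ f s) (n : ℕ) :
    ∀ x : ℝ, (x:ℂ) ∈ s → iteratedDeriv n (fun t : ℝ => f t) x = iteratedDeriv n f x := by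
  induction n generalizing f with
  | zero => intro x hx; simp
  | succ n ih =>
    intro x hx
    have han : AnalyticOnNhd ℂ f s := hf.analyticOnNhd hs
    have hdf : DifferentiableOn ℂ (deriv f) s := (han.deriv).differentiableOn
    rw [iteratedDeriv_succ', iteratedDeriv_succ']
    have hev : (fun t : ℝ => deriv (fun t : ℝ => f ↑t) t) =ᶠ[nhds x] (fun t : ℝ => deriv f ↑t) := by
      have hsx : {t : ℝ | (t:ℂ) ∈ s} ∈ nhds x := (hs.preimage Complex.continuous_ofReal).mem_nhds hx
      filter_upwards [hsx] with t ht
      exact (((han t ht).differentiableAt.hasDerivAt).comp_ofReal).deriv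
    rw [Filter.EventuallyEq.iteratedDeriv_eq n hev]
    exact ih hdf x hx

lemma iteratedDerivWithin_Icc_eq {f : ℝ → ℂ} {U : Set ℝ} (hU : IsOpen U)
    (hIcc : Set.Icc (-1:ℝ) 1 ⊆ U) (hf : ContDiffOn ℝ (⊤:ℕ∞) f U) (n : ℕ)
    {x : ℝ} (hx : x ∈ Set.Icc (-1:ℝ) 1) :
    iteratedDerivWithin n f (Set.Icc (-1:ℝ) 1) x = iteratedDeriv n f x := by
  have h1 : HasFTaylorSeriesUpToOn (n : ℕ∞) f (ftaylorSeriesWithin ℝ f U) U :=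
    (hf.of_le (by exact_mod_cast le_top)).ftaylorSeriesWithin hU.uniqueDiffOn
  have h2 := (h1.mono hIcc).eq_iteratedFDerivWithin_of_uniqueDiffOn le_rfl
    (uniqueDiffOn_Icc (by norm_num)) hx
  have h4 : iteratedFDerivWithin ℝ n f U x = iteratedFDeriv ℝ n f x :=
    iteratedFDerivWithin_of_isOpen n hU (hIcc hx)
  have h5 : iteratedFDerivWithin ℝ n f (Set.Icc (-1:ℝ) 1) x = iteratedFDeriv ℝ n f x := by
    rw [← h2]; exact h4
  rw [iteratedDerivWithin_eq_iteratedFDerivWithin, iteratedDeriv_eq_iteratedFDeriv, h5]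




lemma series_within {g : ℕ → ℝ → ℂ} {w : ℕ → ℕ → ℝ}
    (hg : ∀ j, ContDiffOn ℝ (⊤:ℕ∞) (g j) (Set.Icc (-1:ℝ) 1))
    (hw : ∀ n, Summable (w n))
    (hb : ∀ n j, ∀ x ∈ Set.Icc (-1:ℝ) 1,
      ‖iteratedDerivWithin n (g j) (Set.Icc (-1:ℝ) 1) x‖ ≤ w n j) :
    ContDiffOn ℝ (⊤:ℕ∞) (fun x => ∑' j, g j x) (Set.Icc (-1:ℝ) 1) ∧
    ∀ n, ∀ x ∈ Set.Icc (-1:ℝ) 1,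
      ‖iteratedDerivWithin n (fun x => ∑' j, g j x) (Set.Icc (-1:ℝ) 1) x‖ ≤ ∑' j, w n j := by
  set s : Set ℝ := Set.Icc (-1:ℝ) 1 with hs
  have hD : UniqueDiffOn ℝ s := uniqueDiffOn_Icc (by norm_num)
  have hle : ∀ m : ℕ, (m : WithTop ℕ∞) ≤ ((⊤:ℕ∞) : WithTop ℕ∞) := fun m => by
    exact_mod_cast le_top
  have hlt : ∀ m : ℕ, (m : WithTop ℕ∞) < ((⊤:ℕ∞) : WithTop ℕ∞) := fun m => by
    exact_mod_cast ENat.coe_lt_top (n := m)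
  set F : ℕ → ℝ → ℂ := fun n x => ∑' j, iteratedDerivWithin n (g j) s x with hF
  have hwnn : ∀ n j, 0 ≤ w n j := fun n j =>
    (norm_nonneg _).trans (hb n j 0 (by constructor <;> norm_num))
  have htermcont : ∀ n j, ContinuousOn (iteratedDerivWithin n (g j) s) s := fun n j =>
    (hg j).continuousOn_iteratedDerivWithin (hle n) hD
  have hsummN : ∀ n x, x ∈ s → Summable (fun j => ‖iteratedDerivWithin n (g j) s x‖) :=
    fun n x hx => Summable.of_nonneg_of_le (fun j => norm_nonneg _) (fun j => hb n j x hx) (hw n)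
  have hsumm : ∀ n x, x ∈ s → Summable (fun j => iteratedDerivWithin n (g j) s x) :=
    fun n x hx => (hsummN n x hx).of_norm
  have hFb : ∀ n x, x ∈ s → ‖F n x‖ ≤ ∑' j, w n j := by
    intro n x hx
    calc ‖F n x‖ ≤ ∑' j, ‖iteratedDerivWithin n (g j) s x‖ :=
          norm_tsum_le_tsum_norm (hsummN n x hx)
      _ ≤ ∑' j, w n j := Summable.tsum_le_tsum (fun j => hb n j x hx) (hsummN n x hx) (hw n)
  have hunif : ∀ n, TendstoUniformlyOn
      (fun N x => ∑ j ∈ Finset.range N, iteratedDerivWithin n (g j) s x) (F n) atTop s :=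
    fun n => tendstoUniformlyOn_tsum_nat (hw n) (fun j x hx => hb n j x hx)
  have hFcont : ∀ n, ContinuousOn (F n) s := by
    intro n
    apply (hunif n).continuousOn
    exact Filter.Frequently.of_forall fun N =>
      continuousOn_finset_sum _ fun j _ => htermcont n j
  have hterm : ∀ n j, ∀ t ∈ s, HasDerivWithinAt (iteratedDerivWithin n (g j) s)
      (iteratedDerivWithin (n+1) (g j) s t) s t := by
    intro n j t ht
    have hd : DifferentiableWithinAt ℝ (iteratedDerivWithin n (g j) s) s t :=
      ((hg j).differentiableOn_iteratedDerivWithin (hlt n) hD) t ht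
    have h2 := hd.hasDerivWithinAt
    rwa [← iteratedDerivWithin_succ] at h2
  have hkey : ∀ n, ∀ x ∈ s, F n x = F n (-1) + ∫ t in (-1:ℝ)..x, F (n+1) t := by
    intro n x hx
    have hx1 : (-1:ℝ) ≤ x := hx.1
    have hIccsub : Set.Icc (-1:ℝ) x ⊆ s := Set.Icc_subset_Icc le_rfl hx.2
    have hint : ∀ j, IntervalIntegrable (iteratedDerivWithin (n+1) (g j) s) volume (-1) x := by
      intro j
      apply ContinuousOn.intervalIntegrable
      apply (htermcont (n+1) j).mono
      rwa [Set.uIcc_of_le hx1]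
    have hftc : ∀ j, (∫ t in (-1:ℝ)..x, iteratedDerivWithin (n+1) (g j) s t)
        = iteratedDerivWithin n (g j) s x - iteratedDerivWithin n (g j) s (-1) := by
      intro j
      apply intervalIntegral.integral_eq_sub_of_hasDeriv_right_of_le hx1
        ((htermcont n j).mono hIccsub) _ (hint j)
      intro t ht
      have hts : s ∈ nhds t := Icc_mem_nhds (by linarith [ht.1]) (by linarith [ht.2, hx.2])
      exact ((hterm n j t ⟨ht.1.le, ht.2.le.trans hx.2⟩).hasDerivAt hts).hasDerivWithinAt
    have hInt2 : ∀ j, IntegrableOn (iteratedDerivWithin (n+1) (g j) s) (Set.Ioc (-1:ℝ) x) volume :=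
      fun j => (hint j).1
    have hnormint : Summable
        (fun j => ∫ t in Set.Ioc (-1:ℝ) x, ‖iteratedDerivWithin (n+1) (g j) s t‖) := by
      apply Summable.of_nonneg_of_le (fun j => integral_nonneg (fun t => norm_nonneg _))
        (fun j => ?_) ((hw (n+1)).mul_left 2)
      calc (∫ t in Set.Ioc (-1:ℝ) x, ‖iteratedDerivWithin (n+1) (g j) s t‖)
          ≤ ∫ _ in Set.Ioc (-1:ℝ) x, w (n+1) j := by
            apply setIntegral_mono_on (hInt2 j).norm
              (integrableOn_const measure_Ioc_lt_top.ne)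
              measurableSet_Ioc
            intro t ht
            exact hb (n+1) j t (hIccsub (Set.Ioc_subset_Icc_self ht))
        _ = (volume (Set.Ioc (-1:ℝ) x)).toReal * w (n+1) j := by
            simp [setIntegral_const, smul_eq_mul]
            left; rw [ENNReal.toReal_ofReal']
        _ ≤ 2 * w (n+1) j := by
            apply mul_le_mul_of_nonneg_right _ (hwnn (n+1) j)
            rw [Real.volume_Ioc, ENNReal.toReal_ofReal (by linarith)]
            linarith [hx.2]
    have hswap : (∫ t in (-1:ℝ)..x, F (n+1) t)
        = ∑' j, ∫ t in (-1:ℝ)..x, iteratedDerivWithin (n+1) (g j) s t := by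
      rw [intervalIntegral.integral_of_le hx1, eq_comm]
      calc (∑' j, ∫ t in (-1:ℝ)..x, iteratedDerivWithin (n+1) (g j) s t)
          = ∑' j, ∫ t in Set.Ioc (-1:ℝ) x, iteratedDerivWithin (n+1) (g j) s t :=
            tsum_congr fun j => intervalIntegral.integral_of_le hx1
        _ = ∫ t in Set.Ioc (-1:ℝ) x, F (n+1) t :=
            integral_tsum_of_summable_integral_norm hInt2 hnormint
    rw [hswap, tsum_congr hftc,
      Summable.tsum_sub (hsumm n x hx) (hsumm n (-1) (by constructor <;> norm_num))]
    show F n x = F n (-1) + (F n x - F n (-1))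
    ring
  have hclamp : ∀ t : ℝ, min 1 (max (-1) t) ∈ s := fun t =>
    ⟨le_min (by norm_num) (le_max_left _ _), min_le_left _ _⟩
  have hclamp_eq : ∀ t ∈ s, min 1 (max (-1) t) = t := fun t ht => by
    rw [max_eq_right ht.1, min_eq_right ht.2]
  have hFderiv : ∀ n, ∀ x ∈ s, HasDerivWithinAt (F n) (F (n+1) x) s x := by
    intro n x hx
    set Fc : ℝ → ℂ := fun t => F (n+1) (min 1 (max (-1) t)) with hFc
    have hFcCont : Continuous Fc := by
      apply (hFcont (n+1)).comp_continuous
        (continuous_const.min (continuous_const.max continuous_id)) hclamp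
    have hFcEq : ∀ t ∈ s, Fc t = F (n+1) t := fun t ht => by
      rw [hFc]; simp only [hclamp_eq t ht]
    have hH : ∀ y : ℝ, HasDerivAt (fun y => ∫ t in (-1:ℝ)..y, Fc t) (Fc y) y := by
      intro y
      exact intervalIntegral.integral_hasDerivAt_right
        (hFcCont.intervalIntegrable _ _)
        (hFcCont.stronglyMeasurableAtFilter _ _)
        hFcCont.continuousAt
    have heq : ∀ t ∈ s, F n t = F n (-1) + ∫ y in (-1:ℝ)..t, Fc y := by
      intro t ht
      rw [hkey n t ht]
      congr 1
      apply intervalIntegral.integral_congr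
      intro y hy
      rw [Set.uIcc_of_le ht.1] at hy
      exact (hFcEq y ⟨hy.1, hy.2.trans ht.2⟩).symm
    have hd : HasDerivWithinAt (fun t => F n (-1) + ∫ y in (-1:ℝ)..t, Fc y) (Fc x) s x :=
      ((hH x).const_add (F n (-1))).hasDerivWithinAt
    have h5 := hd.congr (fun t ht => heq t ht) (heq x hx)
    rwa [hFcEq x hx] at h5
  have hdW : ∀ n, ∀ x ∈ s, derivWithin (F n) s x = F (n+1) x := fun n x hx =>
    (hFderiv n x hx).derivWithin (hD x hx)
  have hCD : ∀ (N : ℕ) (n : ℕ), ContDiffOn ℝ N (F n) s := by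
    intro N
    induction N with
    | zero => intro n; exact contDiffOn_zero.2 (hFcont n)
    | succ N ih =>
      intro n
      have hcast : ((N+1 : ℕ) : WithTop ℕ∞) = (N : WithTop ℕ∞) + 1 := by
        push_cast; rfl
      rw [hcast, contDiffOn_succ_iff_derivWithin hD]
      refine ⟨fun x hx => (hFderiv n x hx).differentiableWithinAt, ?_, ?_⟩
      · intro h; exact absurd h (by simp)
      · exact (ih (n+1)).congr (fun x hx => (hdW n x hx))
  have hCDtop : ∀ n, ContDiffOn ℝ (⊤:ℕ∞) (F n) s := by
    intro n
    have h6 : ∀ N : ℕ, ContDiffOn ℝ N (F n) s := fun N => hCD N n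
    exact contDiffOn_infty.2 h6
  have hIter : ∀ n, ∀ x ∈ s, iteratedDerivWithin n (F 0) s x = F n x := by
    intro n
    induction n with
    | zero => intro x hx; simp
    | succ n ih =>
      intro x hx
      rw [iteratedDerivWithin_succ,
        derivWithin_congr (fun t ht => ih t ht) (ih x hx)]
      exact hdW n x hx
  have hF0 : (fun x => ∑' j, g j x) = F 0 := by
    funext x; simp [hF]
  constructor
  · rw [hF0]; exact hCDtop 0
  · intro n x hx
    rw [hF0, hIter n x hx]
    exact hFb n x hx



lemma geom_sum_bound {ρ : ℝ} (hρ0 : 0 < ρ) (hρ1 : ρ < 1) {k : ℝ} (hk : 0 < k) (m : ℕ)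
    (hm : 1 ≤ m) :
    ∃ c > 0, ∃ B > 0, ∀ n : ℕ,
      Summable (fun j : ℕ => ρ ^ j * ((m + j : ℕ) : ℝ) ^ ((n:ℝ)/k)) ∧
      (∑' j : ℕ, ρ ^ j * ((m + j : ℕ) : ℝ) ^ ((n:ℝ)/k))
        ≤ c * B ^ n * (n:ℝ) ^ ((n:ℝ)/k) := by
  set σ : ℝ := Real.sqrt ρ with hσ
  have hσ0 : 0 < σ := Real.sqrt_pos.2 hρ0
  have hσsq : σ * σ = ρ := Real.mul_self_sqrt hρ0.le
  have hσ1 : σ < 1 := by nlinarith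
  set a : ℝ := -Real.log σ with ha
  have ha0 : 0 < a := by
    have := Real.log_neg hσ0 hσ1
    simp only [ha]; linarith
  set B : ℝ := ((k*a)⁻¹) ^ ((1:ℝ)/k) with hB
  have hB0 : 0 < B := Real.rpow_pos_of_pos (by positivity) _
  have h1σ : 0 < 1 - σ := by linarith
  refine ⟨σ⁻¹ ^ m * (1 - σ)⁻¹, by positivity, B, hB0, fun n => ?_⟩
  have hexp : ∀ p : ℕ, σ ^ p = Real.exp (-(a * p)) := by
    intro p
    rw [← Real.exp_log hσ0, ← Real.exp_nat_mul]
    congr 1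
    simp only [ha]; ring
  have hkey : ∀ j : ℕ, ρ ^ j * ((m + j : ℕ) : ℝ) ^ ((n:ℝ)/k)
      ≤ σ ^ j * (σ⁻¹ ^ m * ((n:ℝ) ^ ((n:ℝ)/k) * B ^ n)) := by
    intro j
    have ht : (0:ℝ) < ((m + j : ℕ) : ℝ) := by
      have : 1 ≤ m + j := le_add_right hm
      exact_mod_cast Nat.lt_of_lt_of_le Nat.zero_lt_one this
    have h1 : ρ ^ j = σ ^ j * σ ^ j := by rw [← hσsq, mul_pow]
    have h2 : σ ^ j = σ⁻¹ ^ m * σ ^ (m + j) := by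
      rw [pow_add]
      field_simp
      rw [one_div, inv_pow, inv_mul_cancel₀ (pow_ne_zero _ hσ0.ne')]
    have h3 : σ ^ (m + j) * ((m + j : ℕ) : ℝ) ^ ((n:ℝ)/k) ≤ (((n:ℝ)/k) / a) ^ ((n:ℝ)/k) := by
      rw [hexp (m + j), mul_comm]
      have := rpow_mul_exp_le (s := (n:ℝ)/k) (t := ((m + j : ℕ) : ℝ)) ha0
        (by positivity) ht
      simpa using this
    have h4 : (((n:ℝ)/k) / a) ^ ((n:ℝ)/k) = (n:ℝ) ^ ((n:ℝ)/k) * B ^ n := by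
      have e1 : ((n:ℝ)/k) / a = (n:ℝ) * (k*a)⁻¹ := by field_simp
      rw [e1, Real.mul_rpow (by positivity) (by positivity)]
      congr 1
      rw [hB, ← Real.rpow_natCast (((k*a)⁻¹) ^ ((1:ℝ)/k)) n, ← Real.rpow_mul (by positivity)]
      congr 1
      field_simp
    calc ρ ^ j * ((m + j : ℕ) : ℝ) ^ ((n:ℝ)/k)
        = σ ^ j * (σ ^ j * ((m + j : ℕ) : ℝ) ^ ((n:ℝ)/k)) := by rw [h1]; ring
      _ ≤ σ ^ j * (σ⁻¹ ^ m * ((n:ℝ) ^ ((n:ℝ)/k) * B ^ n)) := by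
          apply mul_le_mul_of_nonneg_left _ (by positivity)
          rw [h2, mul_assoc]
          apply mul_le_mul_of_nonneg_left _ (by positivity)
          rw [← h4]
          exact h3
  have hgeom : Summable (fun j : ℕ => σ ^ j * (σ⁻¹ ^ m * ((n:ℝ) ^ ((n:ℝ)/k) * B ^ n))) :=
    (summable_geometric_of_lt_one hσ0.le hσ1).mul_right _
  have hsum : Summable (fun j : ℕ => ρ ^ j * ((m + j : ℕ) : ℝ) ^ ((n:ℝ)/k)) :=
    Summable.of_nonneg_of_le (fun j => by positivity) hkey hgeom
  refine ⟨hsum, ?_⟩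
  calc (∑' j : ℕ, ρ ^ j * ((m + j : ℕ) : ℝ) ^ ((n:ℝ)/k))
      ≤ ∑' j : ℕ, σ ^ j * (σ⁻¹ ^ m * ((n:ℝ) ^ ((n:ℝ)/k) * B ^ n)) :=
        Summable.tsum_le_tsum hkey hsum hgeom
    _ = (1 - σ)⁻¹ * (σ⁻¹ ^ m * ((n:ℝ) ^ ((n:ℝ)/k) * B ^ n)) := by
        rw [tsum_mul_right, tsum_geometric_of_lt_one hσ0.le hσ1]
    _ = σ⁻¹ ^ m * (1 - σ)⁻¹ * B ^ n * (n:ℝ) ^ ((n:ℝ)/k) := by ring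

/-- main result: if `T` has the `A(k)` property with `k`-threshold
`τ` and `u` is holomorphic and bounded on `[-1,1]_r` with `0 < r ≤ τ`, then the
series `Σ_{n≥0} (T^{<n>} u)|_{[-1,1]}` converges uniformly on `[-1,1]`, its sum
`v` belongs to `G_k([-1,1])` and solves `v - T̃(v) = u`, i.e.
`v(x) = u(x) + Σ_{n≥1} (T^{<n>} u)(x)` on `[-1,1]`. -/
theorem main_solvability (k τ ρ r : ℝ) (hk : 0 < k)
    (T : (ℂ → ℂ) → ℂ → ℂ) (hTlin : IsLinOp T) (hTA : AProp k T τ ρ)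
    (hr : 0 < r) (hrτ : r ≤ τ) (u : ℂ → ℂ)
    (hu : DifferentiableOn ℂ u (nbd r))
    (hub : BddAbove ((fun z => ‖u z‖) '' nbd r)) :
    ∃ v : ℝ → ℂ,
      TendstoUniformlyOn (fun N (x : ℝ) => ∑ n ∈ Finset.range N, (T^[n] u) (x : ℂ))
        v Filter.atTop (Set.Icc (-1) 1) ∧
      GevreyClass k v ∧
      ∀ x ∈ Set.Icc (-1 : ℝ) 1, v x = u (x : ℂ) + ∑' n : ℕ, (T^[n + 1] u) (x : ℂ) := by
  obtain ⟨hτ0, hρmem, hquant, _hseg⟩ := hTA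
  obtain ⟨hρ0, hρ1⟩ := hρmem
  obtain ⟨N, hN⟩ := hquant r hr hrτ
  set m : ℕ := max N 1 with hmdef
  have hm1 : 1 ≤ m := le_max_right N 1
  have hmN : N ≤ m := le_max_left N 1
  have hm1' : ∀ j : ℕ, 1 ≤ m + j := fun j => le_trans hm1 (Nat.le_add_right m j)
  set S0 : ℝ := supOn u (tube k r m) with hS0def
  have hbddtube : BddAbove ((fun z => ‖u z‖) '' tube k r m) :=
    hub.mono (Set.image_mono (tube_subset_nbd hk hr hm1))
  have hu_le : ∀ z ∈ tube k r m, ‖u z‖ ≤ S0 := fun z hz => le_csSup hbddtube ⟨z, hz, rfl⟩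
  have hzmem : (0:ℂ) ∈ seg := ⟨0, by constructor <;> norm_num, by norm_num⟩
  have hS0 : 0 ≤ S0 :=
    (norm_nonneg (u 0)).trans (hu_le 0 (seg_subset_tube hr hm1 hzmem))
  -- the fundamental iteration estimates
  have P : ∀ j : ℕ, DifferentiableOn ℂ (T^[j] u) (tube k r (m+j)) ∧
      (∀ z ∈ tube k r (m+j), ‖T^[j] u z‖ ≤ S0 * ρ^j) := by
    intro j
    induction j with
    | zero =>
      constructor
      · simpa using hu.mono (tube_subset_nbd hk hr hm1)
      · intro z hz
        simpa using hu_le z (by simpa using hz)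
    | succ j ih =>
      have hbdd : BddAbove ((fun z => ‖T^[j] u z‖) '' tube k r (m+j)) := by
        refine ⟨S0 * ρ^j, ?_⟩
        rintro y ⟨z, hz, rfl⟩
        exact ih.2 z hz
      have happ := hN (m+j) (le_trans hmN (Nat.le_add_right m j)) (T^[j] u) ih.1 hbdd
      have hsup : supOn (T^[j] u) (tube k r (m+j)) ≤ S0 * ρ^j := by
        apply Real.sSup_le _ (by positivity)
        rintro y ⟨z', hz', rfl⟩
        exact ih.2 z' hz'
      constructor
      · have h1 := happ.1
        rw [Function.iterate_succ_apply']
        exact h1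
      · intro z hz
        have h1 : ‖T (T^[j] u) z‖ ≤ ρ * supOn (T^[j] u) (tube k r (m+j)) := happ.2 z hz
        calc ‖T^[j+1] u z‖ = ‖T (T^[j] u) z‖ := by rw [Function.iterate_succ_apply']
          _ ≤ ρ * (S0 * ρ^j) := h1.trans (mul_le_mul_of_nonneg_left hsup hρ0.le)
          _ = S0 * ρ^(j+1) := by ring
  set g : ℕ → ℝ → ℂ := fun j x => T^[j] u (x:ℂ) with hgdef
  have hIccB : ∀ j : ℕ, ∀ x ∈ Set.Icc (-1:ℝ) 1, ‖g j x‖ ≤ S0 * ρ^j := fun j x hx =>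
    (P j).2 _ (seg_subset_tube hr (hm1' j) (seg_mem x hx))
  have hsummg : Summable (fun j : ℕ => S0 * ρ^j) :=
    (summable_geometric_of_lt_one hρ0.le hρ1).mul_left S0
  set v : ℝ → ℂ := fun x => ∑' j : ℕ, g j x with hvdef
  have hTU : TendstoUniformlyOn (fun N (x : ℝ) => ∑ n ∈ Finset.range N, (T^[n] u) (x : ℂ))
      v Filter.atTop (Set.Icc (-1) 1) :=
    tendstoUniformlyOn_tsum_nat hsummg (fun j x hx => hIccB j x hx)
  -- Gevrey estimates
  obtain ⟨c, hc, B, hB, hgeo⟩ := geom_sum_bound hρ0 hρ1 hk m hm1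
  set w : ℕ → ℕ → ℝ := fun n j =>
    ((n.factorial : ℝ) * S0 * (2/r)^n) * (ρ^j * ((m + j : ℕ) : ℝ) ^ ((n:ℝ)/k)) with hwdef
  have hw : ∀ n, Summable (w n) := fun n => ((hgeo n).1).mul_left _
  have hgcd : ∀ j, ContDiffOn ℝ (⊤:ℕ∞) (g j)
      ((fun t : ℝ => (t:ℂ)) ⁻¹' tube k r (m+j)) := by
    intro j
    have h1 : AnalyticOnNhd ℂ (T^[j] u) (tube k r (m+j)) :=
      (P j).1.analyticOnNhd (tube_open _ _ _)
    have h2 : ContDiffOn ℂ (⊤:ℕ∞) (T^[j] u) (tube k r (m+j)) :=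
      h1.contDiffOn ((tube_open _ _ _).uniqueDiffOn)
    have h3 : ContDiffOn ℝ (⊤:ℕ∞) (T^[j] u) (tube k r (m+j)) := h2.restrict_scalars ℝ
    exact h3.comp (Complex.ofRealCLM.contDiff.contDiffOn) (fun t ht => ht)
  have hIccU : ∀ j, Set.Icc (-1:ℝ) 1 ⊆ (fun t : ℝ => (t:ℂ)) ⁻¹' tube k r (m+j) :=
    fun j t ht => seg_subset_tube hr (hm1' j) (seg_mem t ht)
  have hb : ∀ n j : ℕ, ∀ x ∈ Set.Icc (-1:ℝ) 1,
      ‖iteratedDerivWithin n (g j) (Set.Icc (-1:ℝ) 1) x‖ ≤ w n j := by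
    intro n j x hx
    set t : ℝ := ((m + j : ℕ) : ℝ) with htdef
    have ht0 : (0:ℝ) < t := by
      rw [htdef]
      have h9 := hm1' j
      exact_mod_cast Nat.lt_of_lt_of_le Nat.zero_lt_one h9
    set δ : ℝ := (r/2) * t ^ (-(1:ℝ)/k) with hδdef
    have htpow : (0:ℝ) < t ^ (-(1:ℝ)/k) := Real.rpow_pos_of_pos ht0 _
    have hδ0 : 0 < δ := by positivity
    have hδlt : δ < r * t ^ (-(1:ℝ)/k) := by
      have : r/2 < r := by linarith
      exact mul_lt_mul_of_pos_right this htpow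
    have hball : Metric.closedBall (x:ℂ) δ ⊆ tube k r (m+j) :=
      closedBall_subset_tube hx hδlt
    have hU : IsOpen ((fun t : ℝ => (t:ℂ)) ⁻¹' tube k r (m+j)) :=
      (tube_open _ _ _).preimage Complex.continuous_ofReal
    have e1 : iteratedDerivWithin n (g j) (Set.Icc (-1:ℝ) 1) x = iteratedDeriv n (g j) x :=
      iteratedDerivWithin_Icc_eq hU (hIccU j) (hgcd j) n hx
    have e2 : iteratedDeriv n (g j) x = iteratedDeriv n (T^[j] u) (x:ℂ) :=
      iteratedDeriv_comp_ofReal (tube_open _ _ _) (P j).1 n x (hIccU j hx)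
    have e3 : ‖iteratedDeriv n (T^[j] u) (x:ℂ)‖ ≤ (n.factorial : ℝ) * (S0 * ρ^j) / δ^n :=
      cauchy_bound hδ0 ((P j).1.mono hball) (fun z hz => (P j).2 z (hball hz)) n
    have hδpow : δ^n = (r/2)^n * (t ^ ((n:ℝ)/k))⁻¹ := by
      rw [hδdef, mul_pow]
      congr 1
      rw [← Real.rpow_natCast (t ^ (-(1:ℝ)/k)) n, ← Real.rpow_mul ht0.le,
        ← Real.rpow_neg ht0.le]
      congr 1
      field_simp
    have e4 : (n.factorial : ℝ) * (S0 * ρ^j) / δ^n = w n j := by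
      show (n.factorial : ℝ) * (S0 * ρ^j) / δ^n
        = (n.factorial : ℝ) * S0 * (2/r)^n * (ρ^j * t ^ ((n:ℝ)/k))
      rw [hδpow]
      have h2r : (2/r)^n = ((r/2)^n)⁻¹ := by
        rw [← inv_pow]
        congr 1
        rw [inv_div]
      rw [h2r]
      have hrn : ((r/2):ℝ)^n ≠ 0 := by positivity
      have htn : (t ^ ((n:ℝ)/k)) ≠ 0 := by positivity
      field_simp
    rw [e1, e2, ← e4]
    exact e3
  have hgcdIcc : ∀ j, ContDiffOn ℝ (⊤:ℕ∞) (g j) (Set.Icc (-1:ℝ) 1) :=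
    fun j => (hgcd j).mono (hIccU j)
  obtain ⟨hvCD, hvB⟩ := series_within hgcdIcc hw hb
  have h2rpos : (0:ℝ) < 2/r := div_pos two_pos hr
  have hS0c : (0:ℝ) ≤ S0 * c := mul_nonneg hS0 hc.le
  have hCpos : (0:ℝ) < S0 * c + 1 := by linarith
  have h2rB : (0:ℝ) ≤ (2/r) * B := mul_nonneg h2rpos.le hB.le
  have hApos : (0:ℝ) < (2/r) * B + 1 := by linarith
  refine ⟨v, hTU, ⟨hvCD, S0 * c + 1, hCpos, (2/r) * B + 1, hApos, ?_⟩, ?_⟩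
  · intro n x hx
    have hfact : (n.factorial : ℝ) ≤ (n:ℝ) ^ (n:ℝ) := by
      rw [Real.rpow_natCast]
      exact_mod_cast Nat.factorial_le_pow n
    have hnn : (n:ℝ)^(n:ℝ) * (n:ℝ)^((n:ℝ)/k) = (n:ℝ)^((n:ℝ)*(1+1/k)) := by
      rcases Nat.eq_zero_or_pos n with h|h
      · subst h; simp
      · rw [← Real.rpow_add (by exact_mod_cast h)]
        congr 1
        field_simp
    have h1 : ∑' j : ℕ, w n j = ((n.factorial : ℝ) * S0 * (2/r)^n)
        * ∑' j : ℕ, (ρ^j * ((m + j : ℕ) : ℝ) ^ ((n:ℝ)/k)) := tsum_mul_left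
    have h2 : ∑' j : ℕ, w n j ≤ ((n.factorial : ℝ) * S0 * (2/r)^n)
        * (c * B ^ n * (n:ℝ) ^ ((n:ℝ)/k)) := by
      rw [h1]
      apply mul_le_mul_of_nonneg_left (hgeo n).2
      have : (0:ℝ) ≤ (2/r)^n := pow_nonneg h2rpos.le n
      positivity
    have c1 : S0 * c ≤ S0 * c + 1 := by linarith
    have c2 : (2/r)^n * B^n ≤ ((2/r)*B + 1)^n := by
      rw [← mul_pow]
      exact pow_le_pow_left₀ h2rB (by linarith) n
    have c3 : (n.factorial : ℝ) * (n:ℝ)^((n:ℝ)/k) ≤ (n:ℝ)^(n:ℝ) * (n:ℝ)^((n:ℝ)/k) :=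
      mul_le_mul_of_nonneg_right hfact (Real.rpow_nonneg (Nat.cast_nonneg n) _)
    have hbc1 : (0:ℝ) ≤ (2/r)^n * B^n :=
      mul_nonneg (pow_nonneg h2rpos.le n) (pow_nonneg hB.le n)
    have hcc1 : (0:ℝ) ≤ (n.factorial : ℝ) * (n:ℝ)^((n:ℝ)/k) :=
      mul_nonneg (Nat.cast_nonneg _) (Real.rpow_nonneg (Nat.cast_nonneg n) _)
    have habc2 : (0:ℝ) ≤ (S0*c+1) * ((2/r)*B+1)^n :=
      mul_nonneg hCpos.le (pow_nonneg hApos.le n)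
    have h3 : ((n.factorial : ℝ) * S0 * (2/r)^n) * (c * B ^ n * (n:ℝ) ^ ((n:ℝ)/k))
        ≤ (S0 * c + 1) * ((2/r)*B + 1)^n * (n:ℝ)^((n:ℝ)*(1+1/k)) := by
      calc ((n.factorial : ℝ) * S0 * (2/r)^n) * (c * B ^ n * (n:ℝ) ^ ((n:ℝ)/k))
          = (S0*c) * ((2/r)^n * B^n) * ((n.factorial : ℝ) * (n:ℝ)^((n:ℝ)/k)) := by ring
        _ ≤ ((S0*c+1) * (((2/r)*B+1)^n)) * ((n:ℝ)^(n:ℝ) * (n:ℝ)^((n:ℝ)/k)) :=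
            mul_le_mul (mul_le_mul c1 c2 hbc1 hCpos.le) c3 hcc1 habc2
        _ = (S0 * c + 1) * ((2/r)*B + 1)^n * (n:ℝ)^((n:ℝ)*(1+1/k)) := by rw [hnn]
    exact (hvB n x hx).trans (h2.trans h3)
  · intro x hx
    have hsx : Summable (fun j : ℕ => g j x) :=
      Summable.of_norm_bounded hsummg (fun j => hIccB j x hx)
    have h0 := Summable.tsum_eq_zero_add hsx
    show (∑' j : ℕ, g j x) = u (x:ℂ) + ∑' n : ℕ, (T^[n + 1] u) (x : ℂ)
    rw [h0]
    rfl
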